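/- Let p be an odd prime, n a positive integer, q = p^n, and let S be a subfield of 𝔽_q. Let P be a polynomial over 𝔽_q all of whose coefficients lie in S, and suppose the evaluation map x ↦ P(x) is planar on 𝔽_q. Then P maps S into S, and the restricted map S → S, x ↦ P(x), is planar on S. -/

import Mathlib

/-- A function on a (finite) field is *planar* if for every nonzero `α` the map
`x ↦ f (x + α) - f x - f α` is a bijection. -/
def IsPlanar {K : Type*} [Ring K] (f : K → K) : Prop :=
  ∀ α : K, α ≠ 0 → Function.Bijective fun x => f (x + α) - f x - f α

theorem stmt3 (p n : ℕ) (hp : p.Prime) (hodd : Odd p) (hn : 0 < n)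
    {K : Type*} [Field K] [Fintype K] (hcard : Fintype.card K = p ^ n)
    (S : Subfield K) (P : Polynomial K) (hcoeff : ∀ i, P.coeff i ∈ S)
    (hplanar : IsPlanar fun x : K => P.eval x) :
    ∃ hmaps : ∀ x : S, P.eval (x : K) ∈ S,
      IsPlanar fun x : S => (⟨P.eval (x : K), hmaps x⟩ : S) := by
  have hmaps : ∀ x : S, P.eval (x : K) ∈ S := by
    intro x
    rw [Polynomial.eval_eq_sum_range]
    exact Subfield.sum_mem S fun i _ => S.mul_mem (hcoeff i) (S.pow_mem x.2 i)
  refine ⟨hmaps, ?_⟩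
  intro α hα
  have hαK : (α : K) ≠ 0 := fun h => hα (Subtype.ext h)
  have hinj := (hplanar (α : K) hαK).injective
  have : Function.Injective fun x : S =>
      (⟨P.eval ((x : K) + α), hmaps (x + α)⟩ : S) - ⟨P.eval (x : K), hmaps x⟩
        - ⟨P.eval (α : K), hmaps α⟩ := by
    intro x y hxy
    have := hinj (a₁ := (x : K)) (a₂ := (y : K)) (by
      simpa using congrArg (Subtype.val) hxy)
    exact Subtype.ext this
  have : Function.Bijective fun x : S =>
      (⟨P.eval ((x : K) + α), hmaps (x + α)⟩ : S) - ⟨P.eval (x : K), hmaps x⟩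
        - ⟨P.eval (α : K), hmaps α⟩ := Finite.injective_iff_bijective.mp this
  convert this using 2 with x
  rfl
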